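/- arXiv:1205.0893 — 3 statements merged into one kernel-verified Lean document; each statement's English description precedes it below -/
import Mathlib

section
/- Let A be a k-algebra, σ a k-algebra automorphism of A, δ a σ-derivation, and E = A[x;σ,δ] the Ore extension. Let ^{σ⁻¹}E denote E with left A-action a·e = σ⁻¹(a)e and the usual right E-action. Then the sequence of E-E-bimodules 0 → E ⊗_A ^{σ⁻¹}E → E ⊗_A E → E → 0 is exact, where the first map is ρ(e ⊗ e') = ex ⊗ e' − e ⊗ xe' (well-defined over A), the second map is the multiplication μ(e ⊗ e') = ee', and the bimodule structure on each tensor product is by left multiplication on the first factor and right multiplication on the second factor. In particular ρ is injective and ker μ = im ρ. -/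
open scoped TensorProduct
open CategoryTheory

noncomputable section
set_option synthInstance.maxHeartbeats 1000000
set_option maxHeartbeats 1000000

/-- `E` is an Ore extension `A[x; σ, δ]` of `A` (with `σ` an automorphism): `A` embeds in `E`
via `ι`, the powers of `x` form a basis of `E` as a left `A`-module, `x a = σ(a) x + δ(a)`,
and `δ` is a `σ`-derivation. -/
structure IsOreExtension (k : Type) [CommRing k] (A : Type) [Ring A] [Algebra k A]
    (E : Type) [Ring E] [Algebra k E] (σ : A ≃ₐ[k] A) (δ : A →ₗ[k] A)
    (ι : A →ₐ[k] E) (x : E) : Prop where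
  isDerivation : ∀ a b : A, δ (a * b) = δ a * b + σ a * δ b
  commRule : ∀ a : A, x * ι a = ι (σ a) * x + ι (δ a)
  spans : ∀ e : E, ∃ c : ℕ →₀ A, e = c.sum fun i a => ι a * x ^ i
  indep : ∀ c : ℕ →₀ A, (c.sum fun i a => ι a * x ^ i) = 0 → c = 0

section Stmt1

variable (k : Type) [CommRing k] (A : Type) [Ring A] [Algebra k A]
  (E : Type) [Ring E] [Algebra k E]
  (σ : A ≃ₐ[k] A) (δ : A →ₗ[k] A) (ι : A →ₐ[k] E) (x : E)

/-- The subspace of `E ⊗_k E` by which one divides to obtain `E ⊗_A E`: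
it is spanned by the elements `eа ⊗ f − e ⊗ af`. -/
def relSub : Submodule k (E ⊗[k] E) :=
  Submodule.span k
    {t | ∃ (e f : E) (a : A), t = (e * ι a) ⊗ₜ[k] f - e ⊗ₜ[k] (ι a * f)}

/-- The subspace of `E ⊗_k E` by which one divides to obtain `E ⊗_A {}^{σ⁻¹}E`:
it is spanned by the elements `ea ⊗ f − e ⊗ σ⁻¹(a)f` (the left `A`-action on the second
factor being twisted by `σ⁻¹`). -/
def relSubTw : Submodule k (E ⊗[k] E) :=
  Submodule.span k
    {t | ∃ (e f : E) (a : A), t = (e * ι a) ⊗ₜ[k] f - e ⊗ₜ[k] (ι (σ.symm a) * f)}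

/-- The map `E ⊗_k E → E ⊗_k E`, `e ⊗ e' ↦ ex ⊗ e' − e ⊗ xe'`, which induces
`ρ : E ⊗_A {}^{σ⁻¹}E → E ⊗_A E`. -/
def rhoLift : E ⊗[k] E →ₗ[k] E ⊗[k] E :=
  TensorProduct.map (LinearMap.mulRight k x) LinearMap.id -
    TensorProduct.map LinearMap.id (LinearMap.mulLeft k x)

/-- The multiplication map `E ⊗_k E → E`, which induces `μ : E ⊗_A E → E`. -/
def muLift : E ⊗[k] E →ₗ[k] E := TensorProduct.lift (LinearMap.mul k E)

def oreL : (ℕ →₀ A) →ₗ[k] E :=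
  Finsupp.lsum k fun i => (LinearMap.mulRight k (x ^ i)).comp ι.toLinearMap

lemma oreL_apply (c : ℕ →₀ A) : oreL k A E ι x c = c.sum fun i a => ι a * x ^ i := rfl

variable {σ δ}

lemma oreL_bij (hOre : IsOreExtension k A E σ δ ι x) :
    Function.Bijective (oreL k A E ι x) := by
  constructor
  · intro c c' h
    have h0 : oreL k A E ι x (c - c') = 0 := by rw [map_sub, h, sub_self]
    rw [oreL_apply] at h0
    have := hOre.indep _ h0
    exact sub_eq_zero.mp this
  · intro e
    obtain ⟨c, hc⟩ := hOre.spans e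
    exact ⟨c, by rw [oreL_apply, ← hc]⟩

/-- coordinates of an element of `E` with respect to the basis `x^i`. -/
def oreCoords (hOre : IsOreExtension k A E σ δ ι x) : E →ₗ[k] (ℕ →₀ A) :=
  (LinearEquiv.ofBijective (oreL k A E ι x) (oreL_bij k A E ι x hOre)).symm.toLinearMap

variable {k A E ι x}
variable (hOre : IsOreExtension k A E σ δ ι x)

lemma oreL_coords (e : E) : oreL k A E ι x (oreCoords k A E ι x hOre e) = e :=
  (LinearEquiv.ofBijective (oreL k A E ι x) (oreL_bij k A E ι x hOre)).apply_symm_apply e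

lemma coords_sum (e : E) :
    ((oreCoords k A E ι x hOre e).sum fun i a => ι a * x ^ i) = e := by
  rw [← oreL_apply, oreL_coords]

lemma coords_unique (e : E) (c : ℕ →₀ A) (h : e = c.sum fun i a => ι a * x ^ i) :
    oreCoords k A E ι x hOre e = c := by
  subst h
  rw [← oreL_apply]
  exact (LinearEquiv.ofBijective (oreL k A E ι x) (oreL_bij k A E ι x hOre)).symm_apply_apply c

lemma coords_mul (a : A) (f : E) :
    oreCoords k A E ι x hOre (ι a * f) =
      (oreCoords k A E ι x hOre f).mapRange (a * ·) (mul_zero a) := by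
  apply coords_unique
  conv_lhs => rw [← coords_sum hOre f]
  rw [Finsupp.mul_sum, Finsupp.sum_mapRange_index (by simp)]
  exact Finsupp.sum_congr fun i _ => by rw [map_mul, mul_assoc]

lemma coords_pow (i : ℕ) :
    oreCoords k A E ι x hOre (x ^ i) = Finsupp.single i 1 := by
  apply coords_unique
  rw [Finsupp.sum_single_index (by simp)]
  simp

variable (k E x) in
/-- `Ψ : (ℕ →₀ E) → E ⊗ E`, `c ↦ Σ cᵢ ⊗ xⁱ`. -/
def orePsi : (ℕ →₀ E) →ₗ[k] E ⊗[k] E :=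
  Finsupp.lsum k fun i => (TensorProduct.mk k E E).flip (x ^ i)

lemma orePsi_apply (c : ℕ →₀ E) : orePsi k E x c = c.sum fun i e => e ⊗ₜ[k] (x ^ i) := by rw [orePsi, Finsupp.lsum_apply]; rfl

variable (τ : A →ₗ[k] E)

/-- `ν : E ⊗ E → (ℕ →₀ E)`, `e ⊗ f ↦ (i ↦ e * τ(coords f i))`. -/
def oreNu : E ⊗[k] E →ₗ[k] (ℕ →₀ E) :=
  TensorProduct.lift
    { toFun := fun e =>
        (Finsupp.mapRange.linearMap ((LinearMap.mulLeft k e).comp τ)).comp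
          (oreCoords k A E ι x hOre)
      map_add' := by
        intro e e'
        ext f j
        simp [Finsupp.mapRange_apply, add_mul]
      map_smul' := by
        intro m e
        ext f j
        simp [Finsupp.mapRange_apply, smul_mul_assoc] }

lemma oreNu_tmul (e f : E) :
    oreNu hOre τ (e ⊗ₜ[k] f) =
      Finsupp.mapRange (fun a => e * τ a) (by simp) (oreCoords k A E ι x hOre f) := by
  ext j
  simp [oreNu, Finsupp.mapRange_apply]

lemma oreNu_tmul_apply (e f : E) (j : ℕ) :
    oreNu hOre τ (e ⊗ₜ[k] f) j = e * τ (oreCoords k A E ι x hOre f j) := by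
  rw [oreNu_tmul]; simp [Finsupp.mapRange_apply]

lemma sub_psi_nu_mem (S : Submodule k (E ⊗[k] E))
    (hgen : ∀ (e : E) (a : A) (i : ℕ),
      e ⊗ₜ[k] (ι a * x ^ i) - (e * τ a) ⊗ₜ[k] (x ^ i) ∈ S)
    (t : E ⊗[k] E) : t - orePsi k E x (oreNu hOre τ t) ∈ S := by
  induction t using TensorProduct.induction_on with
  | zero => simp
  | tmul e f =>
    have h1 : orePsi k E x (oreNu hOre τ (e ⊗ₜ[k] f)) =
        (oreCoords k A E ι x hOre f).sum fun i b => (e * τ b) ⊗ₜ[k] (x ^ i) := by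
      rw [oreNu_tmul, orePsi_apply, Finsupp.sum_mapRange_index (by simp)]
    have h2 : e ⊗ₜ[k] f = (oreCoords k A E ι x hOre f).sum fun i b =>
        e ⊗ₜ[k] (ι b * x ^ i) := by
      conv_lhs => rw [← coords_sum hOre f]
      rw [Finsupp.sum, Finsupp.sum, TensorProduct.tmul_sum]
    rw [h1, h2, ← Finsupp.sum_sub]
    exact Submodule.sum_mem S fun i _ => hgen e _ i
  | add t s ht hs =>
    rw [map_add, map_add, add_sub_add_comm]
    exact add_mem ht hs

lemma nu_relSub : relSub k A E ι ≤ LinearMap.ker (oreNu hOre ι.toLinearMap) := by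
  rw [relSub, Submodule.span_le]
  rintro t ⟨e, f, a, rfl⟩
  rw [SetLike.mem_coe, LinearMap.mem_ker, map_sub]
  ext j
  simp only [Finsupp.sub_apply, oreNu_tmul_apply, coords_mul hOre, Finsupp.mapRange_apply,
    AlgHom.toLinearMap_apply, map_mul, Finsupp.coe_zero, Pi.zero_apply, mul_assoc, sub_self]

lemma nu_relSubTw :
    relSubTw k A E σ ι ≤
      LinearMap.ker (oreNu hOre (ι.toLinearMap ∘ₗ σ.toLinearMap)) := by
  rw [relSubTw, Submodule.span_le]
  rintro t ⟨e, f, a, rfl⟩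
  rw [SetLike.mem_coe, LinearMap.mem_ker, map_sub]
  ext j
  simp only [Finsupp.sub_apply, oreNu_tmul_apply, coords_mul hOre, Finsupp.mapRange_apply,
    LinearMap.comp_apply, AlgHom.toLinearMap_apply, AlgEquiv.toLinearMap_apply, map_mul, σ.apply_symm_apply, Finsupp.coe_zero, Pi.zero_apply, mul_assoc, sub_self]

lemma relSub_gen (e f : E) (a : A) :
    (e * ι a) ⊗ₜ[k] f - e ⊗ₜ[k] (ι a * f) ∈ relSub k A E ι :=
  Submodule.subset_span ⟨e, f, a, rfl⟩

lemma relSubTw_gen (e f : E) (a : A) :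
    (e * ι a) ⊗ₜ[k] f - e ⊗ₜ[k] (ι (σ.symm a) * f) ∈ relSubTw k A E σ ι :=
  Submodule.subset_span ⟨e, f, a, rfl⟩

lemma sub_psi_nu_mem_relSub (t : E ⊗[k] E) :
    t - orePsi k E x (oreNu hOre ι.toLinearMap t) ∈ relSub k A E ι := by
  apply sub_psi_nu_mem
  intro e a i
  have := relSub_gen (ι := ι) e (x ^ i) a
  simpa using neg_mem this

lemma sub_psi_nu_mem_relSubTw (t : E ⊗[k] E) :
    t - orePsi k E x (oreNu hOre (ι.toLinearMap ∘ₗ σ.toLinearMap) t) ∈ relSubTw k A E σ ι := by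
  apply sub_psi_nu_mem
  intro e a i
  have := relSubTw_gen (ι := ι) (σ := σ) e (x ^ i) (σ a)
  rw [σ.symm_apply_apply] at this
  simpa using neg_mem this

lemma mem_relSub_iff (t : E ⊗[k] E) :
    t ∈ relSub k A E ι ↔ oreNu hOre ι.toLinearMap t = 0 := by
  constructor
  · exact fun h => nu_relSub hOre h
  · intro h
    have := sub_psi_nu_mem_relSub hOre t
    rwa [h, map_zero, sub_zero] at this

lemma mem_relSubTw_iff (t : E ⊗[k] E) :
    t ∈ relSubTw k A E σ ι ↔ oreNu hOre (ι.toLinearMap ∘ₗ σ.toLinearMap) t = 0 := by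
  constructor
  · exact fun h => nu_relSubTw hOre h
  · intro h
    have := sub_psi_nu_mem_relSubTw hOre t
    rwa [h, map_zero, sub_zero] at this

lemma rhoLift_tmul (e f : E) :
    rhoLift k E x (e ⊗ₜ[k] f) = (e * x) ⊗ₜ[k] f - e ⊗ₜ[k] (x * f) := by
  simp [rhoLift, TensorProduct.map_tmul]

lemma muLift_tmul (e f : E) : muLift k E (e ⊗ₜ[k] f) = e * f := by
  simp [muLift]

include hOre in
lemma rho_relSubTw_le :
    relSubTw k A E σ ι ≤ (relSub k A E ι).comap (rhoLift k E x) := by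
  rw [relSubTw, Submodule.span_le]
  rintro t ⟨e, f, a, rfl⟩
  rw [SetLike.mem_coe, Submodule.mem_comap, map_sub, rhoLift_tmul, rhoLift_tmul]
  have hc := hOre.commRule (σ.symm a)
  rw [σ.apply_symm_apply] at hc
  have hax : (ι a : E) * x = x * ι (σ.symm a) - ι (δ (σ.symm a)) := by
    rw [hc]; abel
  have h1 := relSub_gen (ι := ι) (e * x) f (σ.symm a)
  have h2 := relSub_gen (ι := ι) e f (δ (σ.symm a))
  have h3 := relSub_gen (ι := ι) e (x * f) a
  have key : (e * ι a * x) ⊗ₜ[k] f - (e * ι a) ⊗ₜ[k] (x * f) -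
      ((e * x) ⊗ₜ[k] (ι (σ.symm a) * f) - e ⊗ₜ[k] (x * (ι (σ.symm a) * f))) =
      ((e * x * ι (σ.symm a)) ⊗ₜ[k] f - (e * x) ⊗ₜ[k] (ι (σ.symm a) * f)) -
      ((e * ι (δ (σ.symm a))) ⊗ₜ[k] f - e ⊗ₜ[k] (ι (δ (σ.symm a)) * f)) -
      ((e * ι a) ⊗ₜ[k] (x * f) - e ⊗ₜ[k] (ι a * (x * f))) := by
    rw [mul_assoc e (ι a) x, hax, mul_sub, ← mul_assoc e x,
      ← mul_assoc x (ι (σ.symm a)) f, hc, add_mul, mul_assoc (ι a : E) x f,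
      TensorProduct.sub_tmul, TensorProduct.tmul_add]
    abel
  rw [key]
  exact sub_mem (sub_mem h1 h2) h3

lemma mu_relSub_le : relSub k A E ι ≤ LinearMap.ker (muLift k E) := by
  rw [relSub, Submodule.span_le]
  rintro t ⟨e, f, a, rfl⟩
  rw [SetLike.mem_coe, LinearMap.mem_ker, map_sub, muLift_tmul, muLift_tmul, mul_assoc,
    sub_self]

lemma muLift_rhoLift (t : E ⊗[k] E) : muLift k E (rhoLift k E x t) = 0 := by
  have h : (muLift k E).comp (rhoLift k E x) = 0 := by
    apply TensorProduct.ext'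
    intro e f
    simp [muLift_tmul, rhoLift_tmul, mul_assoc]
  exact DFunLike.congr_fun h t

lemma nu_tmul_pow (e : E) (i : ℕ) :
    oreNu hOre ι.toLinearMap (e ⊗ₜ[k] (x ^ i)) = Finsupp.single i e := by
  ext j
  rw [oreNu_tmul_apply, coords_pow hOre]
  by_cases h : i = j <;> simp [Finsupp.single_apply, h]

lemma tmul_pow_sub_mem (e : E) (i : ℕ) :
    e ⊗ₜ[k] (x ^ i) - (e * x ^ i) ⊗ₜ[k] (1 : E) ∈ LinearMap.range (rhoLift k E x) := by
  induction i generalizing e with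
  | zero => simpa using zero_mem _
  | succ n ih =>
    have h2 := ih (e * x)
    have h1 : rhoLift k E x (e ⊗ₜ[k] (x ^ n)) =
        (e * x) ⊗ₜ[k] (x ^ n) - e ⊗ₜ[k] (x ^ (n + 1)) := by
      rw [rhoLift_tmul, pow_succ']
    have h3 := sub_mem h2 (LinearMap.mem_range_self _ (e ⊗ₜ[k] (x ^ n)))
    rw [h1] at h3
    have key : e ⊗ₜ[k] (x ^ (n + 1)) - (e * x ^ (n + 1)) ⊗ₜ[k] (1 : E) =
        ((e * x) ⊗ₜ[k] (x ^ n) - (e * x * x ^ n) ⊗ₜ[k] (1 : E)) -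
        ((e * x) ⊗ₜ[k] (x ^ n) - e ⊗ₜ[k] (x ^ (n + 1))) := by
      rw [pow_succ' x n, ← mul_assoc]
      abel
    rw [key]
    exact h3

lemma psi_mem_range (c : ℕ →₀ E) (hc : (c.sum fun i e => e * x ^ i) = 0) :
    orePsi k E x c ∈ LinearMap.range (rhoLift k E x) := by
  have h := Submodule.sum_mem (LinearMap.range (rhoLift k E x))
    (fun i (_ : i ∈ c.support) => tmul_pow_sub_mem (k := k) (c i) i)
  have heq : (∑ i ∈ c.support, ((c i) ⊗ₜ[k] (x ^ i) - (c i * x ^ i) ⊗ₜ[k] (1 : E))) =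
      orePsi k E x c - (c.sum fun i e => e * x ^ i) ⊗ₜ[k] (1 : E) := by
    rw [orePsi_apply, Finsupp.sum, Finsupp.sum, TensorProduct.sum_tmul,
      ← Finset.sum_sub_distrib]
  rw [heq, hc, TensorProduct.zero_tmul, sub_zero] at h
  exact h

include hOre in
lemma rho_pre (t : E ⊗[k] E) (h : rhoLift k E x t ∈ relSub k A E ι) :
    t ∈ relSubTw k A E σ ι := by
  set c := oreNu hOre (ι.toLinearMap ∘ₗ σ.toLinearMap) t with hcdef
  have h0 : t - orePsi k E x c ∈ relSubTw k A E σ ι := sub_psi_nu_mem_relSubTw hOre t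
  have hpsi : rhoLift k E x (orePsi k E x c) ∈ relSub k A E ι := by
    have h2 := rho_relSubTw_le hOre h0
    rw [Submodule.mem_comap, map_sub] at h2
    simpa using sub_mem h h2
  rw [mem_relSub_iff hOre] at hpsi
  have h3 : oreNu hOre ι.toLinearMap (rhoLift k E x (orePsi k E x c)) =
      c.sum fun i e => Finsupp.single i (e * x) - Finsupp.single (i + 1) e := by
    rw [orePsi_apply, map_finsuppSum, map_finsuppSum]
    apply Finsupp.sum_congr
    intro i _
    rw [rhoLift_tmul, map_sub, nu_tmul_pow hOre, ← pow_succ', nu_tmul_pow hOre]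
  rw [h3] at hpsi
  have h4 : ∀ j, c (j + 1) * x = c j := by
    intro j
    have hj := DFunLike.congr_fun hpsi (j + 1)
    simp only [Finsupp.sum_apply, Finsupp.sub_apply, Finsupp.single_apply,
      Finsupp.coe_zero, Pi.zero_apply, add_left_inj] at hj
    rw [Finsupp.sum_sub, Finsupp.sum_ite_eq', Finsupp.sum_ite_eq'] at hj
    by_cases hj1 : j + 1 ∈ c.support <;> by_cases hj2 : j ∈ c.support <;>
      simp_all [Finsupp.notMem_support_iff, sub_eq_zero]
  have h5 : ∀ m j, c j = c (j + m) * x ^ m := by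
    intro m
    induction m with
    | zero => simp
    | succ n ihm =>
      intro j
      rw [ihm j, ← h4 (j + n), mul_assoc, ← pow_succ']
      rfl
  have h6 : c = 0 := by
    ext j
    have hnot : j + (c.support.sup id + 1) ∉ c.support := by
      intro hmem
      have := Finset.le_sup (f := id) hmem
      simp only [id] at this
      omega
    rw [h5 (c.support.sup id + 1) j, Finsupp.notMem_support_iff.mp hnot, zero_mul,
      Finsupp.coe_zero, Pi.zero_apply]
  rw [h6, map_zero, sub_zero] at h0
  exact h0


variable (k A E σ δ ι x)

/-- **The fundamental short exact sequence of an Ore extension.**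
For an Ore extension `E = A[x; σ, δ]` with `σ` an automorphism, the sequence of
`E`-`E`-bimodules `0 → E ⊗_A {}^{σ⁻¹}E → E ⊗_A E → E → 0` is exact, where the first map is
`ρ(e ⊗ e') = ex ⊗ e' − e ⊗ xe'` and the second is the multiplication `μ`.  Here
`E ⊗_A E` and `E ⊗_A {}^{σ⁻¹}E` are realized as quotients of `E ⊗_k E` by `relSub` and
`relSubTw`; the first two conjuncts say that `ρ` and `μ` are well defined, the next two
that the bimodule actions descend (so the quotients are `E`-`E`-bimodules and the maps,
being induced by bimodule maps, are maps of bimodules), and the last three give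
injectivity of `ρ`, exactness in the middle, and surjectivity of `μ`. -/
theorem ore_extension_short_exact_sequence (hOre : IsOreExtension k A E σ δ ι x) :
    ∃ (h₁ : relSubTw k A E σ ι ≤ (relSub k A E ι).comap (rhoLift k E x))
      (h₂ : relSub k A E ι ≤ LinearMap.ker (muLift k E)),
      (∀ c : E, (relSub k A E ι).map
          (TensorProduct.map (LinearMap.mulLeft k c) LinearMap.id) ≤ relSub k A E ι) ∧
      (∀ c : E, (relSub k A E ι).map
          (TensorProduct.map LinearMap.id (LinearMap.mulRight k c)) ≤ relSub k A E ι) ∧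
      (∀ c : E, (relSubTw k A E σ ι).map
          (TensorProduct.map (LinearMap.mulLeft k c) LinearMap.id) ≤ relSubTw k A E σ ι) ∧
      (∀ c : E, (relSubTw k A E σ ι).map
          (TensorProduct.map LinearMap.id (LinearMap.mulRight k c)) ≤ relSubTw k A E σ ι) ∧
      Function.Injective
        ⇑(Submodule.mapQ (relSubTw k A E σ ι) (relSub k A E ι) (rhoLift k E x) h₁) ∧
      Function.Exact
        ⇑(Submodule.mapQ (relSubTw k A E σ ι) (relSub k A E ι) (rhoLift k E x) h₁)
        ⇑(Submodule.liftQ (relSub k A E ι) (muLift k E) h₂) ∧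
      Function.Surjective ⇑(Submodule.liftQ (relSub k A E ι) (muLift k E) h₂) := by
  refine ⟨rho_relSubTw_le hOre, mu_relSub_le (k := k) (A := A) (E := E) (ι := ι),
    ?_, ?_, ?_, ?_, ?_, ?_, ?_⟩
  · intro c
    rw [relSub, Submodule.map_span, Submodule.span_le]
    rintro _ ⟨_, ⟨e, f, a, rfl⟩, rfl⟩
    exact Submodule.subset_span ⟨c * e, f, a, by simp [TensorProduct.map_tmul, mul_assoc]⟩
  · intro c
    rw [relSub, Submodule.map_span, Submodule.span_le]
    rintro _ ⟨_, ⟨e, f, a, rfl⟩, rfl⟩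
    exact Submodule.subset_span ⟨e, f * c, a, by simp [TensorProduct.map_tmul, mul_assoc]⟩
  · intro c
    rw [relSubTw, Submodule.map_span, Submodule.span_le]
    rintro _ ⟨_, ⟨e, f, a, rfl⟩, rfl⟩
    exact Submodule.subset_span ⟨c * e, f, a, by simp [TensorProduct.map_tmul, mul_assoc]⟩
  · intro c
    rw [relSubTw, Submodule.map_span, Submodule.span_le]
    rintro _ ⟨_, ⟨e, f, a, rfl⟩, rfl⟩
    exact Submodule.subset_span ⟨e, f * c, a, by simp [TensorProduct.map_tmul, mul_assoc]⟩
  · rw [injective_iff_map_eq_zero]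
    intro ξ hξ
    obtain ⟨t, rfl⟩ := Submodule.Quotient.mk_surjective _ ξ
    rw [Submodule.mapQ_apply, Submodule.Quotient.mk_eq_zero] at hξ
    rw [Submodule.Quotient.mk_eq_zero]
    exact rho_pre hOre t hξ
  · intro ξ
    constructor
    · intro h0
      obtain ⟨t, rfl⟩ := Submodule.Quotient.mk_surjective _ ξ
      rw [Submodule.liftQ_apply] at h0
      set c := oreNu hOre ι.toLinearMap t with hc
      have hsub : t - orePsi k E x c ∈ relSub k A E ι := sub_psi_nu_mem_relSub hOre t
      have hmu : muLift k E (orePsi k E x c) = 0 := by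
        have h5 := mu_relSub_le (k := k) (A := A) (E := E) (ι := ι) hsub
        rwa [LinearMap.mem_ker, map_sub, h0, zero_sub, neg_eq_zero] at h5
      have hc0 : (c.sum fun i e => e * x ^ i) = 0 := by
        rw [← hmu, orePsi_apply, map_finsuppSum]
        exact Finsupp.sum_congr fun i _ => (muLift_tmul _ _).symm
      obtain ⟨u, hu⟩ := psi_mem_range (k := k) c hc0
      refine ⟨Submodule.Quotient.mk u, ?_⟩
      rw [Submodule.mapQ_apply, hu]
      exact (Submodule.Quotient.eq _).mpr (by simpa using neg_mem hsub)
    · rintro ⟨ζ, rfl⟩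
      obtain ⟨u, rfl⟩ := Submodule.Quotient.mk_surjective _ ζ
      rw [Submodule.mapQ_apply, Submodule.liftQ_apply]
      exact muLift_rhoLift u
  · intro e
    exact ⟨Submodule.Quotient.mk (e ⊗ₜ[k] 1),
      by rw [Submodule.liftQ_apply, muLift_tmul, mul_one]⟩

end Stmt1
end
end

section
/- Let A be a k-algebra, σ a k-algebra automorphism of A, δ a σ-derivation, and E = A[x;σ,δ]. For n ≥ 0 consider the E-E-bimodules E ⊗_k A^{⊗n} ⊗_k E and E ⊗_k A^{⊗n} ⊗_k ^{σ⁻¹}E (left E-action on the first tensor factor, right E-action on the last; in the second module the last factor carries the twisted left A-action a·e = σ⁻¹(a)e used in forming the differential), with differentials b'_{0,n}(a_0⊗a_1⊗…⊗a_{n+1}) = Σ_{i=0}^{n} (−1)^i a_0⊗…⊗a_i a_{i+1}⊗…⊗a_{n+1} and b'_{1,n}(a_0⊗a_1⊗…⊗a_{n+1}) = Σ_{i=0}^{n−1} (−1)^i a_0⊗…⊗a_i a_{i+1}⊗…⊗a_{n+1} + (−1)^n a_0⊗…⊗a_{n−1}⊗σ⁻¹(a_n)a_{n+1}. Define E-E-bilinear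 maps ψ'_n: E ⊗ A^{⊗n} ⊗ ^{σ⁻¹}E → E ⊗ A^{⊗n} ⊗ E by ψ'_n(1⊗a_1⊗…⊗a_n⊗1) = x⊗σ⁻¹(a_1)⊗…⊗σ⁻¹(a_n)⊗1 − 1⊗a_1⊗…⊗a_n⊗x − Σ_{j=1}^{n} 1⊗a_1⊗…⊗a_{j−1}⊗δσ⁻¹(a_j)⊗σ⁻¹(a_{j+1})⊗…⊗σ⁻¹(a_n)⊗1. Then ψ' is a morphism of complexes of E-E-bimodules, i.e., b'_{0,n} ∘ ψ'_n = ψ'_{n−1} ∘ b'_{1,n} for all n ≥ 1. -/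
open scoped TensorProduct
open CategoryTheory

noncomputable section
set_option synthInstance.maxHeartbeats 1000000
set_option maxHeartbeats 1000000

section Bar

/-- Merging of two adjacent entries of a tuple: `(a_0, …, a_n) ↦
(a_0, …, a_{i-1}, a_i * a_{i+1}, a_{i+2}, …, a_n)`. -/
def mergeAt {A : Type} [Mul A] {n : ℕ} (a : Fin (n + 1) → A) (i : Fin n) : Fin n → A :=
  fun j =>
    if (j : ℕ) < (i : ℕ) then a (Fin.castSucc j)
    else if (j : ℕ) = (i : ℕ) then a (Fin.castSucc j) * a (Fin.succ j)
    else a (Fin.succ j)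

variable (k : Type) [CommRing k] (A : Type) [Ring A] [Algebra k A]
  (E : Type) [Ring E] [Algebra k E]

/-- The `n`-th term `E ⊗ A^{⊗n} ⊗ E` of the bar-type complexes. -/
abbrev BarObj (n : ℕ) : Type := (E ⊗[k] TensorPower k n A) ⊗[k] E

end Bar

section Aux

variable {k : Type} [CommRing k] {A : Type} [Ring A] [Algebra k A]
variable (σ : A ≃ₐ[k] A) (δ : A →ₗ[k] A)

def Dm {n : ℕ} (a : Fin n → A) (j : Fin n) : Fin n → A :=
  fun i => if (i : ℕ) < (j : ℕ) then a i else if i = j then δ (σ.symm (a j)) else σ.symm (a i)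

variable {n : ℕ}

lemma Dm_zero_zero (a : Fin (n + 1) → A) : Dm σ δ a 0 0 = δ (σ.symm (a 0)) := by
  simp [Dm]

lemma Dm_zero_succ (a : Fin (n + 1) → A) :
    (fun l : Fin n => Dm σ δ a 0 l.succ) = fun l : Fin n => σ.symm (a l.succ) := by
  funext l
  simp [Dm, Fin.ext_iff]

lemma Dm_succ_zero (a : Fin (n + 1) → A) (j : Fin n) : Dm σ δ a j.succ 0 = a 0 := by
  simp [Dm]

lemma Dm_succ_succ (a : Fin (n + 1) → A) (j : Fin n) :
    (fun l : Fin n => Dm σ δ a j.succ l.succ) = Dm σ δ (fun l : Fin n => a l.succ) j := by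
  funext l
  simp only [Dm, Fin.val_succ, Fin.ext_iff]
  all_goals split_ifs <;> first | rfl | omega

lemma Dm_castSucc_castSucc (a : Fin (n + 1) → A) (j : Fin n) :
    (fun l : Fin n => Dm σ δ a j.castSucc l.castSucc)
      = Dm σ δ (fun l : Fin n => a l.castSucc) j := by
  funext l
  simp only [Dm, Fin.coe_castSucc, Fin.ext_iff]
  all_goals split_ifs <;> first | rfl | omega

lemma Dm_castSucc_last (a : Fin (n + 1) → A) (j : Fin n) :
    Dm σ δ a j.castSucc (Fin.last n) = σ.symm (a (Fin.last n)) := by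
  have hj : (j : ℕ) < n := j.isLt
  simp only [Dm, Fin.coe_castSucc, Fin.val_last, Fin.ext_iff]
  all_goals split_ifs <;> first | rfl | omega

lemma Dm_last_castSucc (a : Fin (n + 1) → A) :
    (fun l : Fin n => Dm σ δ a (Fin.last n) l.castSucc) = fun l : Fin n => a l.castSucc := by
  funext l
  have hl : (l : ℕ) < n := l.isLt
  simp only [Dm, Fin.coe_castSucc, Fin.val_last, Fin.ext_iff]
  all_goals split_ifs <;> first | rfl | omega

lemma Dm_last_last (a : Fin (n + 1) → A) :
    Dm σ δ a (Fin.last n) (Fin.last n) = δ (σ.symm (a (Fin.last n))) := by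
  simp [Dm]

lemma mergeAt_symm (a : Fin (n + 1) → A) (i : Fin n) :
    mergeAt (fun l => σ.symm (a l)) i = fun l => σ.symm (mergeAt a i l) := by
  funext l
  simp only [mergeAt]
  split_ifs <;> first | rfl | omega | rw [map_mul]


lemma mergeAt_Dm_castSucc_of_lt (a : Fin (n + 1) → A) (i j : Fin n) (h : j < i) :
    mergeAt (Dm σ δ a j.castSucc) i = Dm σ δ (mergeAt a i) j := by
  funext l
  have h' : (j : ℕ) < (i : ℕ) := h
  simp only [mergeAt, Dm, Fin.coe_castSucc, Fin.val_succ, Fin.ext_iff]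
  all_goals split_ifs <;> first | rfl | omega | rw [map_mul]

lemma mergeAt_Dm_succ_of_lt (a : Fin (n + 1) → A) (i j : Fin n) (h : i < j) :
    mergeAt (Dm σ δ a j.succ) i = Dm σ δ (mergeAt a i) j := by
  funext l
  have h' : (i : ℕ) < (j : ℕ) := h
  simp only [mergeAt, Dm, Fin.coe_castSucc, Fin.val_succ, Fin.ext_iff]
  all_goals split_ifs <;> first | rfl | omega | rw [map_mul]

lemma mergeAt_Dm_castSucc_self (a : Fin (n + 1) → A) (i : Fin n) :
    mergeAt (Dm σ δ a i.castSucc) i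
      = Function.update (Dm σ δ (mergeAt a i) i) i
          (δ (σ.symm (a i.castSucc)) * σ.symm (a i.succ)) := by
  funext l
  by_cases hl : l = i
  · subst hl
    rw [Function.update_self]
    simp only [mergeAt, Dm, Fin.coe_castSucc, Fin.val_succ, Fin.ext_iff]
    all_goals split_ifs <;> first | rfl | omega
  · rw [Function.update_of_ne hl]
    have hl' : (l : ℕ) ≠ (i : ℕ) := fun hc => hl (Fin.ext hc)
    simp only [mergeAt, Dm, Fin.coe_castSucc, Fin.val_succ, Fin.ext_iff]
    all_goals split_ifs <;> first | rfl | omega | rw [map_mul]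

lemma mergeAt_Dm_succ_self (a : Fin (n + 1) → A) (i : Fin n) :
    mergeAt (Dm σ δ a i.succ) i
      = Function.update (Dm σ δ (mergeAt a i) i) i
          (a i.castSucc * δ (σ.symm (a i.succ))) := by
  funext l
  by_cases hl : l = i
  · subst hl
    rw [Function.update_self]
    simp only [mergeAt, Dm, Fin.coe_castSucc, Fin.val_succ, Fin.ext_iff]
    all_goals split_ifs <;> first | rfl | omega
  · rw [Function.update_of_ne hl]
    have hl' : (l : ℕ) ≠ (i : ℕ) := fun hc => hl (Fin.ext hc)
    simp only [mergeAt, Dm, Fin.coe_castSucc, Fin.val_succ, Fin.ext_iff]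
    all_goals split_ifs <;> first | rfl | omega | rw [map_mul]

lemma Dm_mergeAt_self (hδ : ∀ a b : A, δ (a * b) = δ a * b + σ a * δ b)
    (a : Fin (n + 1) → A) (i : Fin n) :
    Dm σ δ (mergeAt a i) i
      = Function.update (Dm σ δ (mergeAt a i) i) i
          (δ (σ.symm (a i.castSucc)) * σ.symm (a i.succ)
            + a i.castSucc * δ (σ.symm (a i.succ))) := by
  have hval : Dm σ δ (mergeAt a i) i i
      = δ (σ.symm (a i.castSucc)) * σ.symm (a i.succ)
        + a i.castSucc * δ (σ.symm (a i.succ)) := by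
    have h1 : Dm σ δ (mergeAt a i) i i = δ (σ.symm (a i.castSucc * a i.succ)) := by
      simp only [mergeAt, Dm, Fin.coe_castSucc, Fin.val_succ, Fin.ext_iff]
      all_goals split_ifs <;> first | rfl | omega
    rw [h1, map_mul, hδ, AlgEquiv.apply_symm_apply]
  conv_lhs => rw [← Function.update_eq_self i (Dm σ δ (mergeAt a i) i)]
  rw [hval]

lemma key_sum (hδ : ∀ a b : A, δ (a * b) = δ a * b + σ a * δ b)
    (a : Fin (n + 1) → A) (i : Fin n) :
    ∑ j : Fin (n + 1), (PiTensorProduct.tprod k) (mergeAt (Dm σ δ a j) i)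
      = ∑ j : Fin n, (PiTensorProduct.tprod k) (Dm σ δ (mergeAt a i) j) := by
  rw [Fin.sum_univ_succAbove (fun j => (PiTensorProduct.tprod k) (mergeAt (Dm σ δ a j) i)) i.succ]
  rw [← Finset.sum_erase_add Finset.univ _ (Finset.mem_univ i),
    ← Finset.sum_erase_add Finset.univ
      (fun j => (PiTensorProduct.tprod k) (Dm σ δ (mergeAt a i) j)) (Finset.mem_univ i)]
  have hL : ∀ j ∈ Finset.univ.erase i,
      (PiTensorProduct.tprod k) (mergeAt (Dm σ δ a (Fin.succ i |>.succAbove j)) i)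
        = (PiTensorProduct.tprod k) (Dm σ δ (mergeAt a i) j) := by
    intro j hj
    rcases lt_or_gt_of_ne (Finset.ne_of_mem_erase hj) with h | h
    · rw [Fin.succAbove_of_castSucc_lt _ _ (by
        rw [Fin.castSucc_lt_succ_iff]; exact h.le),
        mergeAt_Dm_castSucc_of_lt σ δ a i j h]
    · rw [Fin.succAbove_of_le_castSucc _ _ (by
        rw [Fin.succ_le_castSucc_iff]; exact h),
        mergeAt_Dm_succ_of_lt σ δ a i j h]
  rw [Finset.sum_congr rfl hL]
  have hmid : (PiTensorProduct.tprod k) (mergeAt (Dm σ δ a i.succ) i)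
      + (PiTensorProduct.tprod k) (mergeAt (Dm σ δ a (Fin.succ i |>.succAbove i)) i)
      = (PiTensorProduct.tprod k) (Dm σ δ (mergeAt a i) i) := by
    rw [Fin.succAbove_of_castSucc_lt _ _ Fin.castSucc_lt_succ,
      mergeAt_Dm_castSucc_self, mergeAt_Dm_succ_self]
    conv_rhs => rw [Dm_mergeAt_self σ δ hδ a i]
    rw [MultilinearMap.map_update_add]
    exact add_comm _ _
  rw [← hmid]
  abel

end Aux


/-- **The Guccione–Guccione chain map.** Let `E = A[x;σ,δ]` be an Ore extension with `σ` an
automorphism.  Let `b'₀`, `b'₁` be the differentials of the two bar-type complexes with terms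
`E ⊗ A^{⊗n} ⊗ E` (resp. `E ⊗ A^{⊗n} ⊗ {}^{σ⁻¹}E`), and let `ψ'` be the `E`-`E`-bilinear maps
given by the Guccione–Guccione formula (all specified here by their values on pure tensors).
Then `ψ'` is a morphism of complexes: `b'₀ ∘ ψ' = ψ' ∘ b'₁`. -/
theorem ore_extension_psi_chain_map
    (k : Type) [CommRing k] (A : Type) [Ring A] [Algebra k A]
    (E : Type) [Ring E] [Algebra k E]
    (σ : A ≃ₐ[k] A) (δ : A →ₗ[k] A) (ι : A →ₐ[k] E) (x : E)
    (hOre : IsOreExtension k A E σ δ ι x)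
    (B0 B1 : (n : ℕ) → (BarObj k A E (n + 1) →ₗ[k] BarObj k A E n))
    (Ψ : (n : ℕ) → (BarObj k A E n →ₗ[k] BarObj k A E n))
    (hB0 : ∀ (n : ℕ) (e f : E) (a : Fin (n + 1) → A),
      B0 n ((e ⊗ₜ[k] PiTensorProduct.tprod k a) ⊗ₜ[k] f) =
        ((e * ι (a 0)) ⊗ₜ[k] PiTensorProduct.tprod k (fun j : Fin n => a j.succ)) ⊗ₜ[k] f
        + ∑ i : Fin n, ((-1 : ℤ) ^ ((i : ℕ) + 1)) •
            ((e ⊗ₜ[k] PiTensorProduct.tprod k (mergeAt a i)) ⊗ₜ[k] f)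
        + ((-1 : ℤ) ^ (n + 1)) •
            ((e ⊗ₜ[k] PiTensorProduct.tprod k (fun j : Fin n => a j.castSucc)) ⊗ₜ[k]
              (ι (a (Fin.last n)) * f)))
    (hB1 : ∀ (n : ℕ) (e f : E) (a : Fin (n + 1) → A),
      B1 n ((e ⊗ₜ[k] PiTensorProduct.tprod k a) ⊗ₜ[k] f) =
        ((e * ι (a 0)) ⊗ₜ[k] PiTensorProduct.tprod k (fun j : Fin n => a j.succ)) ⊗ₜ[k] f
        + ∑ i : Fin n, ((-1 : ℤ) ^ ((i : ℕ) + 1)) •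
            ((e ⊗ₜ[k] PiTensorProduct.tprod k (mergeAt a i)) ⊗ₜ[k] f)
        + ((-1 : ℤ) ^ (n + 1)) •
            ((e ⊗ₜ[k] PiTensorProduct.tprod k (fun j : Fin n => a j.castSucc)) ⊗ₜ[k]
              (ι (σ.symm (a (Fin.last n))) * f)))
    (hΨ : ∀ (n : ℕ) (e f : E) (a : Fin n → A),
      Ψ n ((e ⊗ₜ[k] PiTensorProduct.tprod k a) ⊗ₜ[k] f) =
        ((e * x) ⊗ₜ[k] PiTensorProduct.tprod k (fun i : Fin n => σ.symm (a i))) ⊗ₜ[k] f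
        - (e ⊗ₜ[k] PiTensorProduct.tprod k a) ⊗ₜ[k] (x * f)
        - ∑ j : Fin n, (e ⊗ₜ[k] PiTensorProduct.tprod k (fun i : Fin n =>
            if (i : ℕ) < (j : ℕ) then a i
            else if i = j then δ (σ.symm (a j))
            else σ.symm (a i))) ⊗ₜ[k] f) :
    ∀ n : ℕ, (B0 n).comp (Ψ (n + 1)) = (Ψ n).comp (B1 n) := by
  obtain ⟨hδ, hcomm, -, -⟩ := hOre
  have hΨ' : ∀ (m : ℕ) (e f : E) (a : Fin m → A),
      Ψ m ((e ⊗ₜ[k] PiTensorProduct.tprod k a) ⊗ₜ[k] f) =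
        ((e * x) ⊗ₜ[k] PiTensorProduct.tprod k (fun i : Fin m => σ.symm (a i))) ⊗ₜ[k] f
        - (e ⊗ₜ[k] PiTensorProduct.tprod k a) ⊗ₜ[k] (x * f)
        - ∑ j : Fin m, (e ⊗ₜ[k] PiTensorProduct.tprod k (Dm σ δ a j)) ⊗ₜ[k] f := hΨ
  intro n
  ext e a f
  simp only [TensorProduct.AlgebraTensorModule.curry_apply, LinearMap.compMultilinearMap_apply,
    TensorProduct.curry_apply, LinearMap.coe_restrictScalars, LinearMap.coe_comp,
    Function.comp_apply]
  rw [hΨ' (n+1) e f a, hB1 n e f a]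
  simp only [map_sub, map_add, map_sum, map_zsmul, hB0, hΨ', mergeAt_symm,
    Finset.sum_add_distrib]
  have h1 : e * x * ι (σ.symm (a 0)) = e * ι (a 0) * x + e * ι (δ (σ.symm (a 0))) := by
    rw [mul_assoc, hcomm, AlgEquiv.apply_symm_apply, mul_add, ← mul_assoc]
  have h2 : x * (ι (σ.symm (a (Fin.last n))) * f)
      = ι (a (Fin.last n)) * (x * f) + ι (δ (σ.symm (a (Fin.last n)))) * f := by
    rw [← mul_assoc, hcomm, AlgEquiv.apply_symm_apply, add_mul, mul_assoc]
  have hQ : (∑ j : Fin (n + 1), ∑ i : Fin n,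
        (-1 : ℤ) ^ ((i : ℕ) + 1) •
          (e ⊗ₜ[k] (PiTensorProduct.tprod k) (mergeAt (Dm σ δ a j) i)) ⊗ₜ[k] f)
      = ∑ i : Fin n, ∑ j : Fin n,
        (-1 : ℤ) ^ ((i : ℕ) + 1) •
          (e ⊗ₜ[k] (PiTensorProduct.tprod k) (Dm σ δ (mergeAt a i) j)) ⊗ₜ[k] f := by
    rw [Finset.sum_comm]
    refine Finset.sum_congr rfl fun i _ => ?_
    have hk := congrArg (fun t => ((-1 : ℤ) ^ ((i : ℕ) + 1)) • (e ⊗ₜ[k] t) ⊗ₜ[k] f)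
      (key_sum (k := k) σ δ hδ a i)
    simp only [TensorProduct.tmul_sum, TensorProduct.sum_tmul] at hk
    exact Finset.smul_sum.symm.trans (hk.trans Finset.smul_sum)
  rw [hQ]
  rw [Fin.sum_univ_succ (fun j : Fin (n + 1) =>
    ((e * ι (Dm σ δ a j 0)) ⊗ₜ[k] (PiTensorProduct.tprod k)
      fun l : Fin n => Dm σ δ a j l.succ) ⊗ₜ[k] f)]
  rw [Fin.sum_univ_castSucc (fun j : Fin (n + 1) =>
    (-1 : ℤ) ^ (n + 1) •
      (e ⊗ₜ[k] (PiTensorProduct.tprod k) fun l : Fin n => Dm σ δ a j l.castSucc) ⊗ₜ[k]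
        (ι (Dm σ δ a j (Fin.last n)) * f))]
  simp only [Dm_zero_zero, Dm_zero_succ, Dm_succ_zero, Dm_succ_succ, Dm_castSucc_castSucc,
    Dm_castSucc_last, Dm_last_castSucc, Dm_last_last]
  rw [h1, h2]
  have hss : ∀ (r : ℤ) (u v : BarObj k A E n), r • (u - v) = r • u - r • v :=
    fun r u v => smul_sub r u v
  have hsa : ∀ (r : ℤ) (u v : BarObj k A E n), r • (u + v) = r • u + r • v :=
    fun r u v => smul_add r u v
  have hsm : ∀ (r : ℤ) (g : Fin n → BarObj k A E n), r • ∑ j, g j = ∑ j, r • g j :=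
    fun r g => Finset.smul_sum
  simp only [TensorProduct.add_tmul, TensorProduct.tmul_add, smul_sub, smul_add, hss, hsm, hsa,
    Finset.smul_sum, Finset.sum_sub_distrib, Finset.sum_add_distrib]
  have hs1 := Finset.sum_sub_distrib (s := (Finset.univ : Finset (Fin n)))
    (f := fun x_1 : Fin n =>
      (-1 : ℤ) ^ ((x_1 : ℕ) + 1) •
          ((e * x) ⊗ₜ[k] (PiTensorProduct.tprod k) fun i => σ.symm (mergeAt a x_1 i)) ⊗ₜ[k] f
        - (-1 : ℤ) ^ ((x_1 : ℕ) + 1) •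
          (e ⊗ₜ[k] (PiTensorProduct.tprod k) (mergeAt a x_1)) ⊗ₜ[k] (x * f))
    (g := fun x_1 : Fin n => ∑ j : Fin n,
      (-1 : ℤ) ^ ((x_1 : ℕ) + 1) •
        (e ⊗ₜ[k] (PiTensorProduct.tprod k) (Dm σ δ (mergeAt a x_1) j)) ⊗ₜ[k] f)
  have hs2 := Finset.sum_sub_distrib (s := (Finset.univ : Finset (Fin n)))
    (f := fun x_1 : Fin n =>
      (-1 : ℤ) ^ ((x_1 : ℕ) + 1) •
          ((e * x) ⊗ₜ[k] (PiTensorProduct.tprod k) fun i => σ.symm (mergeAt a x_1 i)) ⊗ₜ[k] f)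
    (g := fun x_1 : Fin n =>
      (-1 : ℤ) ^ ((x_1 : ℕ) + 1) •
          (e ⊗ₜ[k] (PiTensorProduct.tprod k) (mergeAt a x_1)) ⊗ₜ[k] (x * f))
  rw [hs1, hs2]
  abel
end
end

section
/- Let A be a k-algebra, σ a k-algebra automorphism of A, δ a σ-derivation, E = A[x;σ,δ], and ν a k-algebra automorphism of A. Suppose ν' is a k-algebra endomorphism of E such that ν'(a) = σ⁻¹(ν(a)) for all a ∈ A and ν'(x) = ux + b for some u, b ∈ A. Then σ⁻¹(ν(σ(a)))·u = u·ν(a) for all a ∈ A. -/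
open scoped TensorProduct
open CategoryTheory

noncomputable section
set_option synthInstance.maxHeartbeats 1000000
set_option maxHeartbeats 1000000

/-- If `ν'` is an algebra endomorphism of the Ore extension `E = A[x; σ, δ]` with
`ν'|_A = σ⁻¹ ∘ ν` and `ν'(x) = u x + b`, then `σ⁻¹(ν(σ(a))) u = u ν(a)` for all `a ∈ A`. -/
theorem ore_extension_nakayama_u_relation
    (k : Type) [CommRing k] (A : Type) [Ring A] [Algebra k A]
    (E : Type) [Ring E] [Algebra k E]
    (σ : A ≃ₐ[k] A) (δ : A →ₗ[k] A) (ι : A →ₐ[k] E) (x : E)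
    (hOre : IsOreExtension k A E σ δ ι x)
    (ν : A ≃ₐ[k] A) (ν' : E →ₐ[k] E) (u b : A)
    (hA : ∀ a : A, ν' (ι a) = ι (σ.symm (ν a)))
    (hx : ν' x = ι u * x + ι b) :
    ∀ a : A, σ.symm (ν (σ a)) * u = u * ν a := by
  intro a
  -- apply ν' to the commutation rule
  have h := congrArg ν' (hOre.commRule a)
  simp only [map_mul, map_add, hA, hx] at h
  -- rewrite x * ι (σ.symm (ν a)) using the commutation rule
  have hcomm := hOre.commRule (σ.symm (ν a))
  -- set coefficients
  set d : A := u * ν a - σ.symm (ν (σ a)) * u with hd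
  set e : A := u * δ (σ.symm (ν a)) + b * σ.symm (ν a)
      - (σ.symm (ν (σ a)) * b + σ.symm (ν (δ a))) with he
  have key : ι d * x + ι e = 0 := by
    have expand : (ι u * x + ι b) * ι (σ.symm (ν a))
        = ι (u * ν a) * x + ι (u * δ (σ.symm (ν a)) + b * σ.symm (ν a)) := by
      rw [add_mul, mul_assoc, hcomm]
      simp only [AlgEquiv.apply_symm_apply, map_mul, map_add]
      noncomm_ring
    rw [expand] at h
    have : ι d * x + ι e =
        (ι (u * ν a) * x + ι (u * δ (σ.symm (ν a)) + b * σ.symm (ν a)))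
        - (ι (σ.symm (ν (σ a))) * (ι u * x + ι b) + ι (σ.symm (ν (δ a)))) := by
      simp only [hd, he, map_sub, map_add, map_mul]
      noncomm_ring
    rw [this, h, sub_self]
  -- use linear independence
  have hc : (Finsupp.single 1 d + Finsupp.single 0 e : ℕ →₀ A) = 0 := by
    apply hOre.indep
    rw [Finsupp.sum_add_index' (fun i => by simp) (fun i a₁ a₂ => by rw [map_add, add_mul]),
      Finsupp.sum_single_index (by simp), Finsupp.sum_single_index (by simp)]
    simpa using key
  have hd0 : d = 0 := by
    have := DFunLike.congr_fun hc 1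
    simpa using this
  exact (sub_eq_zero.mp hd0).symm
end
end
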